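/- Let w : ℤ → ℝ → ℝ be a family of differentiable functions with w_n(t) ≠ 0 for all n, t, satisfying for all n ∈ ℤ and t ∈ ℝ the equation ẇ_n = (w_{n+1} − w_n)(w_n − w_{n−1})( w_{n+2}/w_{n+1} − w_{n−2}/w_{n−1} ). Define u_n(t) = (w_{n+2}(t) − w_{n+1}(t))(w_{n+1}(t) − w_n(t)) / w_{n+1}(t). Then for all n ∈ ℤ and t ∈ ℝ, u̇_n = u_n (u_{n+2} + u_{n+1} − u_{n−1} − u_{n−2}), i.e., u solves the INB equation. -/

import Mathlib

/-- Equation `ẇₙ = (w_{n+1}−wₙ)(wₙ−w_{n−1})(w_{n+2}/w_{n+1} − w_{n−2}/w_{n−1})` is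
transformed into the INB equation by `uₙ = (w_{n+2}−w_{n+1})(w_{n+1}−wₙ)/w_{n+1}`. -/
theorem stmt_8 (w : ℤ → ℝ → ℝ)
    (hwne : ∀ (n : ℤ) (t : ℝ), w n t ≠ 0)
    (hw : ∀ (n : ℤ) (t : ℝ), HasDerivAt (w n)
      ((w (n + 1) t - w n t) * (w n t - w (n - 1) t)
        * (w (n + 2) t / w (n + 1) t - w (n - 2) t / w (n - 1) t)) t)
    (u : ℤ → ℝ → ℝ)
    (hu : ∀ (n : ℤ) (t : ℝ),
      u n t = (w (n + 2) t - w (n + 1) t) * (w (n + 1) t - w n t) / w (n + 1) t) :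
    ∀ (n : ℤ) (t : ℝ), HasDerivAt (u n)
      (u n t * (u (n + 2) t + u (n + 1) t - u (n - 1) t - u (n - 2) t)) t := by
  intro n t
  have hun : u n = fun t => (w (n + 2) t - w (n + 1) t) * (w (n + 1) t - w n t) / w (n + 1) t :=
    funext (hu n)
  have e1 : n + 1 + 1 = n + 2 := by ring
  have e2 : n + 1 - 1 = n := by ring
  have e3 : n + 1 + 2 = n + 3 := by ring
  have e4 : n + 1 - 2 = n - 1 := by ring
  have f1 : n + 2 + 1 = n + 3 := by ring
  have f2 : n + 2 - 1 = n + 1 := by ring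
  have f3 : n + 2 + 2 = n + 4 := by ring
  have f4 : n + 2 - 2 = n := by ring
  have g1 : n - 1 + 2 = n + 1 := by ring
  have g2 : n - 1 + 1 = n := by ring
  have g3 : n - 2 + 2 = n := by ring
  have g4 : n - 2 + 1 = n - 1 := by ring
  have h1 := hw n t
  have h2 := hw (n + 1) t
  have h3 := hw (n + 2) t
  rw [e1, e2, e3, e4] at h2
  rw [f1, f2, f3, f4] at h3
  have hD := ((h3.sub h2).mul (h2.sub h1)).div h2 (hwne (n + 1) t)
  rw [hun]
  convert hD using 1
  · rfl
  · rfl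
  · rfl
  simp only [hu, e1, e2, e3, e4, f1, f2, f3, f4, g1, g2, g3, g4, Pi.sub_apply, Pi.mul_apply]
  have a1 := hwne (n - 1) t
  have a2 := hwne n t
  have a3 := hwne (n + 1) t
  have a4 := hwne (n + 2) t
  have a5 := hwne (n + 3) t
  field_simp
  ring
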